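/- Let A be a Banach algebra with a bounded approximate identity, ‖·‖_α a cross algebra norm on tensor products with matrix algebras, and B a closed subspace of A. Then the subspace B ⊗ M_k of A ⊗^α M_k is complete (hence closed). Moreover, each coordinate map A ⊗ M_k → A, Σ_{ij} a_{ij} ⊗ E_{ij} ↦ a_{ij}, is continuous with norm at most M², where M is a bound for the approximate identity. -/

import Mathlib

open Matrix Filter

lemma std_sandwich {A : Type*} [NonUnitalNormedRing A] {k : ℕ}
    (x : Matrix (Fin k) (Fin k) A) (i j : Fin k) (a b : A) :
    Matrix.single i i a * x * Matrix.single j j b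
      = Matrix.single i j (a * x i j * b) := by
  ext p q
  rcases eq_or_ne q j with rfl | hq
  · rcases eq_or_ne p i with rfl | hp
    · rw [Matrix.mul_single_apply_same,
        Matrix.single_mul_apply_same]
      simp [Matrix.single]
    · rw [Matrix.mul_single_apply_same,
        Matrix.single_mul_apply_of_ne _ _ _ _ _ hp, zero_mul]
      simp [Matrix.single, Ne.symm hp]
  · rw [Matrix.mul_single_apply_of_ne _ _ _ _ _ hq]
    simp [Matrix.single, Ne.symm hq]

lemma sandwich_tendsto {A : Type*} [NonUnitalNormedRing A]
    {ι : Type*} [Nonempty ι] [SemilatticeSup ι] (e : ι → A) (M : ℝ)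
    (heM : ∀ l, ‖e l‖ ≤ M)
    (hel : ∀ a : A, Tendsto (fun l => e l * a) atTop (nhds a))
    (her : ∀ a : A, Tendsto (fun l => a * e l) atTop (nhds a))
    (a : A) : Tendsto (fun l => e l * a * e l) atTop (nhds a) := by
  rw [tendsto_iff_norm_sub_tendsto_zero]
  have key : ∀ l, ‖e l * a * e l - a‖ ≤ M * ‖a * e l - a‖ + ‖e l * a - a‖ := by
    intro l
    have h1 : e l * a * e l - a = e l * (a * e l - a) + (e l * a - a) := by
      noncomm_ring
    rw [h1]
    refine (norm_add_le _ _).trans ?_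
    gcongr
    calc ‖e l * (a * e l - a)‖ ≤ ‖e l‖ * ‖a * e l - a‖ := norm_mul_le _ _
      _ ≤ M * ‖a * e l - a‖ := by
          exact mul_le_mul_of_nonneg_right (heM l) (norm_nonneg _)
  have hlim : Tendsto (fun l => M * ‖a * e l - a‖ + ‖e l * a - a‖) atTop (nhds 0) := by
    have h2 := (tendsto_iff_norm_sub_tendsto_zero.1 (her a)).const_mul M
    have h3 := tendsto_iff_norm_sub_tendsto_zero.1 (hel a)
    simpa using h2.add h3
  exact squeeze_zero (fun l => norm_nonneg _) key hlim

/-- Let `A` be a Banach algebra with a bounded approximate identity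
`(e_l)` bounded by `M`, and let `N = ‖·‖_α` be a cross algebra norm on `A ⊗ M_k`
(identified with `k × k` matrices over `A`, with `a ⊗ E_{ij}` being the matrix
`stdBasisMatrix i j a`).  Then each coordinate map is continuous with norm at most `M²`,
and for every closed subspace `B` of `A` the subspace `B ⊗ M_k` is complete: every
`N`-Cauchy sequence of matrices with entries in `B` converges in `N` to a matrix with
entries in `B`. -/
theorem matrix_subspace_complete_of_boundedApproximateIdentity
    (A : Type*) [NonUnitalNormedRing A] [NormedSpace ℂ A]
    [IsScalarTower ℂ A A] [SMulCommClass ℂ A A] [CompleteSpace A]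
    (ι : Type*) [Nonempty ι] [SemilatticeSup ι] (e : ι → A) (M : ℝ)
    (heM : ∀ l, ‖e l‖ ≤ M)
    (hel : ∀ a : A, Filter.Tendsto (fun l => e l * a) Filter.atTop (nhds a))
    (her : ∀ a : A, Filter.Tendsto (fun l => a * e l) Filter.atTop (nhds a))
    (k : ℕ)
    (N : Matrix (Fin k) (Fin k) A → ℝ)
    (hN0 : ∀ x, N x = 0 ↔ x = 0)
    (hNadd : ∀ x y, N (x + y) ≤ N x + N y)
    (hNsmul : ∀ (c : ℂ) x, N (c • x) = ‖c‖ * N x)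
    (hNmul : ∀ x y, N (x * y) ≤ N x * N y)
    (hNcross : ∀ (a : A) (i j : Fin k), N (Matrix.single i j a) = ‖a‖)
    (B : Submodule ℂ A) (hB : IsClosed (B : Set A)) :
    (∀ (x : Matrix (Fin k) (Fin k) A) (i j : Fin k), ‖x i j‖ ≤ M ^ 2 * N x) ∧
    ∀ u : ℕ → Matrix (Fin k) (Fin k) A,
      (∀ m i j, u m i j ∈ B) →
      (∀ ε : ℝ, 0 < ε → ∃ n₀ : ℕ, ∀ m n : ℕ, n₀ ≤ m → n₀ ≤ n → N (u m - u n) < ε) →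
      ∃ x : Matrix (Fin k) (Fin k) A, (∀ i j, x i j ∈ B) ∧
        Filter.Tendsto (fun m => N (u m - x)) Filter.atTop (nhds 0) := by
  have hM0 : 0 ≤ M := le_trans (norm_nonneg _) (heM Classical.ofNonempty)
  have hNzero : N 0 = 0 := (hN0 0).2 rfl
  have hNneg : ∀ x, N (-x) = N x := by
    intro x
    have := hNsmul (-1) x
    simpa using this
  have hNnonneg : ∀ x, 0 ≤ N x := by
    intro x
    have h := hNadd x (-x)
    rw [add_neg_cancel, hNzero, hNneg] at h
    linarith
  -- coordinate bound
  have coord : ∀ (x : Matrix (Fin k) (Fin k) A) (i j : Fin k), ‖x i j‖ ≤ M ^ 2 * N x := by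
    intro x i j
    have hbound : ∀ l, ‖e l * x i j * e l‖ ≤ M ^ 2 * N x := by
      intro l
      have h1 : ‖e l * x i j * e l‖
          = N (Matrix.single i i (e l) * x * Matrix.single j j (e l)) := by
        rw [std_sandwich, hNcross]
      rw [h1]
      calc N (Matrix.single i i (e l) * x * Matrix.single j j (e l))
          ≤ N (Matrix.single i i (e l) * x) * N (Matrix.single j j (e l)) := hNmul _ _
        _ ≤ N (Matrix.single i i (e l)) * N x * N (Matrix.single j j (e l)) := by
            refine mul_le_mul_of_nonneg_right (hNmul _ _) (hNnonneg _)
        _ = ‖e l‖ * N x * ‖e l‖ := by rw [hNcross, hNcross]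
        _ ≤ M * N x * M := by
            refine mul_le_mul (mul_le_mul_of_nonneg_right (heM l) (hNnonneg _)) (heM l)
              (norm_nonneg _) (mul_nonneg hM0 (hNnonneg _))
        _ = M ^ 2 * N x := by ring
    have hlim := (sandwich_tendsto e M heM hel her (x i j)).norm
    exact le_of_tendsto hlim (Filter.Eventually.of_forall hbound)
  refine ⟨coord, ?_⟩
  intro u hmem hcauchy
  -- N dominated by sum of coordinate norms
  have Nsum : ∀ y : Matrix (Fin k) (Fin k) A, N y ≤ ∑ i : Fin k, ∑ j : Fin k, ‖y i j‖ := by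
    intro y
    have hle : ∀ (s : Finset (Fin k × Fin k)) (f : Fin k × Fin k → Matrix (Fin k) (Fin k) A),
        N (∑ t ∈ s, f t) ≤ ∑ t ∈ s, N (f t) := by
      intro s f
      induction s using Finset.cons_induction with
      | empty => simp [hNzero]
      | cons a s ha ih =>
        rw [Finset.sum_cons, Finset.sum_cons]
        exact (hNadd _ _).trans (by linarith)
    calc N y = N (∑ p : Fin k × Fin k, Matrix.single p.1 p.2 (y p.1 p.2)) := by
          congr 1
          rw [Fintype.sum_prod_type]
          exact matrix_eq_sum_single y
      _ ≤ ∑ p : Fin k × Fin k, N (Matrix.single p.1 p.2 (y p.1 p.2)) := hle _ _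
      _ = ∑ i : Fin k, ∑ j : Fin k, ‖y i j‖ := by
          rw [Fintype.sum_prod_type]
          simp [hNcross]
  -- coordinate sequences are Cauchy
  have hcoordCauchy : ∀ i j, CauchySeq (fun m => u m i j) := by
    intro i j
    rw [Metric.cauchySeq_iff]
    intro ε hε
    obtain ⟨n₀, hn₀⟩ := hcauchy (ε / (M ^ 2 + 1)) (by positivity)
    refine ⟨n₀, fun m hm n hn => ?_⟩
    rw [dist_eq_norm]
    have h1 : ‖u m i j - u n i j‖ ≤ M ^ 2 * N (u m - u n) := by
      have := coord (u m - u n) i j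
      simpa using this
    have h2 := hn₀ m n hm hn
    have h3 : M ^ 2 * N (u m - u n) < M ^ 2 * (ε / (M ^ 2 + 1)) ∨
        M ^ 2 * N (u m - u n) = 0 := by
      rcases eq_or_lt_of_le (sq_nonneg M) with hM | hM
      · exact Or.inr (by rw [← hM]; ring)
      · exact Or.inl (by exact mul_lt_mul_of_pos_left h2 hM)
    have h4 : M ^ 2 * (ε / (M ^ 2 + 1)) < ε := by
      rw [mul_div_assoc']
      rw [div_lt_iff₀ (by positivity)]
      nlinarith [sq_nonneg M]
    rcases h3 with h3 | h3
    · linarith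
    · linarith
  -- limits of coordinates
  have hex : ∀ i j, ∃ b : A, Tendsto (fun m => u m i j) atTop (nhds b) :=
    fun i j => cauchySeq_tendsto_of_complete (hcoordCauchy i j)
  choose x hx using hex
  refine ⟨Matrix.of fun i j => x i j, ?_, ?_⟩
  · intro i j
    have : ∀ m, u m i j ∈ (B : Set A) := fun m => hmem m i j
    exact hB.mem_of_tendsto (hx i j) (Filter.Eventually.of_forall this)
  · have hbd : ∀ m, N (u m - Matrix.of fun i j => x i j)
        ≤ ∑ i : Fin k, ∑ j : Fin k, ‖u m i j - x i j‖ := by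
      intro m
      have := Nsum (u m - Matrix.of fun i j => x i j)
      simpa using this
    have hsum : Tendsto (fun m => ∑ i : Fin k, ∑ j : Fin k, ‖u m i j - x i j‖)
        atTop (nhds 0) := by
      have : ∀ i j, Tendsto (fun m => ‖u m i j - x i j‖) atTop (nhds 0) :=
        fun i j => tendsto_iff_norm_sub_tendsto_zero.1 (hx i j)
      have h := tendsto_finset_sum (Finset.univ : Finset (Fin k)) fun i _ =>
        tendsto_finset_sum (Finset.univ : Finset (Fin k)) fun j _ => this i j
      simpa using h
    exact squeeze_zero (fun m => hNnonneg _) hbd hsum
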